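/- Let $f : \mathbb{R}^n \to \mathbb{R}$ have $L$-Lipschitz gradient. Let $x, g, d \in \mathbb{R}^n$ with $d, g \neq 0$, and suppose: $\frac{d^T g}{\|d\| \|g\|} \leq -\beta$ for some $\beta > 0$; $\kappa_1 \|g\| \leq \|d\| \leq \kappa_2 \|g\|$ for constants $\kappa_1, \kappa_2 > 0$; and $\|\nabla f(x) - g\| \leq \kappa \alpha \|g\|$ for $\kappa > 0$ and step size $\alpha > 0$. If $\alpha \leq \frac{\beta(1-\theta)}{L\kappa_2/2 + \kappa}$ with $\theta \in (0,1)$, then $f(x + \alpha d) \leq f(x) + \alpha \theta\, d^T g$. -/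

import Mathlib

open scoped RealInnerProductSpace

lemma aux_deriv {n : ℕ} (f : EuclideanSpace ℝ (Fin n) → ℝ)
    (hdiff : Differentiable ℝ f) (x s : EuclideanSpace ℝ (Fin n)) (t : ℝ) :
    HasDerivAt (fun t : ℝ => f (x + t • s)) ⟪gradient f (x + t • s), s⟫ t := by
  have h1 : HasDerivAt (fun t : ℝ => x + t • s) s t := by
    simpa using ((hasDerivAt_id t).smul_const s).const_add x
  have h2 := ((hdiff (x + t • s)).hasGradientAt).hasFDerivAt
  have := h2.comp_hasDerivAt t h1
  exact this

lemma descent_lemma {n : ℕ} (f : EuclideanSpace ℝ (Fin n) → ℝ) (L : ℝ) (hL : 0 ≤ L)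
    (hdiff : Differentiable ℝ f)
    (hLip : ∀ x y, ‖gradient f x - gradient f y‖ ≤ L * ‖x - y‖)
    (x s : EuclideanSpace ℝ (Fin n)) :
    f (x + s) ≤ f x + ⟪gradient f x, s⟫ + L / 2 * ‖s‖ ^ 2 := by
  set φ : ℝ → ℝ := fun t => f (x + t • s) - t * ⟪gradient f x, s⟫ - L * t ^ 2 / 2 * ‖s‖ ^ 2
    with hφ
  have hd : ∀ t : ℝ, HasDerivAt φ
      (⟪gradient f (x + t • s), s⟫ - ⟪gradient f x, s⟫ - L * t * ‖s‖ ^ 2) t := by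
    intro t
    have h1 := aux_deriv f hdiff x s t
    have h2 : HasDerivAt (fun t : ℝ => t * ⟪gradient f x, s⟫) ⟪gradient f x, s⟫ t := by
      simpa using (hasDerivAt_id t).mul_const _
    have h3 : HasDerivAt (fun t : ℝ => L * t ^ 2 / 2 * ‖s‖ ^ 2) (L * t * ‖s‖ ^ 2) t := by
      have : HasDerivAt (fun t : ℝ => t ^ 2) (2 * t) t := by
        simpa using hasDerivAt_pow 2 t
      have := (((this.const_mul L).div_const 2).mul_const (‖s‖ ^ 2))
      rw [show L * t * ‖s‖ ^ 2 = L * (2 * t) / 2 * ‖s‖ ^ 2 by ring]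
      exact this
    exact (h1.sub h2).sub h3
  have hanti : AntitoneOn φ (Set.Icc 0 1) := by
    apply antitoneOn_of_deriv_nonpos (convex_Icc 0 1)
    · exact Continuous.continuousOn (by
        have : Continuous φ := by
          apply Continuous.sub
          apply Continuous.sub
          · exact hdiff.continuous.comp (by continuity)
          · continuity
          · continuity
        exact this)
    · intro t ht
      exact (hd t).differentiableAt.differentiableWithinAt
    · intro t ht
      rw [interior_Icc] at ht
      rw [(hd t).deriv]
      have hb : ⟪gradient f (x + t • s) - gradient f x, s⟫ ≤ L * t * ‖s‖ ^ 2 := by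
        calc ⟪gradient f (x + t • s) - gradient f x, s⟫
            ≤ ‖gradient f (x + t • s) - gradient f x‖ * ‖s‖ := real_inner_le_norm _ _
          _ ≤ (L * ‖(x + t • s) - x‖) * ‖s‖ := by
              have := hLip (x + t • s) x
              exact mul_le_mul_of_nonneg_right this (norm_nonneg s)
          _ = L * t * ‖s‖ ^ 2 := by
              rw [add_sub_cancel_left, norm_smul]
              simp [abs_of_pos ht.1]
              ring
      have : ⟪gradient f (x + t • s), s⟫ - ⟪gradient f x, s⟫ =
          ⟪gradient f (x + t • s) - gradient f x, s⟫ := by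
        rw [inner_sub_left]
      rw [this]
      linarith [hb]
  have h01 : φ 1 ≤ φ 0 := hanti (by norm_num) (by norm_num) (by norm_num)
  simp only [hφ, one_smul, one_pow, mul_one, zero_smul, add_zero, zero_mul, zero_pow,
    mul_zero, zero_div, sub_zero] at h01
  linarith

/-- Lemma 3.2: sufficient decrease for a general descent direction. -/
theorem stmt_9
    {n : ℕ} (f : EuclideanSpace ℝ (Fin n) → ℝ) (L : ℝ) (hL : 0 < L)
    (hdiff : Differentiable ℝ f)
    (hLip : ∀ x y, ‖gradient f x - gradient f y‖ ≤ L * ‖x - y‖)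
    (x g d : EuclideanSpace ℝ (Fin n)) (α θ κ κ₁ κ₂ β : ℝ)
    (hd : d ≠ 0) (hg : g ≠ 0)
    (hβ : 0 < β) (hangle : ⟪d, g⟫ / (‖d‖ * ‖g‖) ≤ -β)
    (hκ₁ : 0 < κ₁) (hκ₂ : 0 < κ₂)
    (hnorm1 : κ₁ * ‖g‖ ≤ ‖d‖) (hnorm2 : ‖d‖ ≤ κ₂ * ‖g‖)
    (hκ : 0 < κ) (hα : 0 < α)
    (hacc : ‖gradient f x - g‖ ≤ κ * α * ‖g‖)
    (hθ0 : 0 < θ) (hθ1 : θ < 1)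
    (hαsmall : α ≤ β * (1 - θ) / (L * κ₂ / 2 + κ)) :
    f (x + α • d) ≤ f x + α * θ * ⟪d, g⟫ := by
  have hdn : 0 < ‖d‖ := norm_pos_iff.mpr hd
  have hgn : 0 < ‖g‖ := norm_pos_iff.mpr hg
  have hangle' : ⟪d, g⟫ ≤ -β * (‖d‖ * ‖g‖) := by
    have := (div_le_iff₀ (mul_pos hdn hgn)).mp hangle
    linarith
  have hdesc := descent_lemma f L hL.le hdiff hLip x (α • d)
  have hnsmul : ‖α • d‖ = α * ‖d‖ := by
    rw [norm_smul, Real.norm_eq_abs, abs_of_pos hα]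
  have hinner : ⟪gradient f x, α • d⟫ = α * ⟪gradient f x, d⟫ := by
    rw [real_inner_smul_right]
  have hsplit : ⟪gradient f x, d⟫ ≤ ⟪d, g⟫ + κ * α * ‖g‖ * ‖d‖ := by
    have h1 : ⟪gradient f x, d⟫ = ⟪g, d⟫ + ⟪gradient f x - g, d⟫ := by
      rw [inner_sub_left]; ring
    have h2 : ⟪gradient f x - g, d⟫ ≤ κ * α * ‖g‖ * ‖d‖ := by
      calc ⟪gradient f x - g, d⟫ ≤ ‖gradient f x - g‖ * ‖d‖ := real_inner_le_norm _ _
        _ ≤ κ * α * ‖g‖ * ‖d‖ := mul_le_mul_of_nonneg_right hacc (norm_nonneg d)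
    rw [h1, real_inner_comm g d]
    linarith
  have hden : 0 < L * κ₂ / 2 + κ := by positivity
  have hα' : α * (L * κ₂ / 2 + κ) ≤ β * (1 - θ) := by
    have := (le_div_iff₀ hden).mp hαsmall
    linarith
  have hdd : ‖d‖ ^ 2 ≤ κ₂ * ‖g‖ * ‖d‖ := by
    nlinarith [mul_le_mul_of_nonneg_right hnorm2 hdn.le]
  have step1 : (1 - θ) * ⟪d, g⟫ ≤ -(α * (L * κ₂ / 2 + κ)) * (‖d‖ * ‖g‖) := by
    nlinarith [mul_le_mul_of_nonneg_right hα' (mul_pos hdn hgn).le,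
      mul_le_mul_of_nonneg_left hangle' (by linarith : (0:ℝ) ≤ 1 - θ)]
  -- key inequality
  have key : α * ⟪gradient f x, d⟫ + L / 2 * (α * ‖d‖) ^ 2 ≤ α * θ * ⟪d, g⟫ := by
    nlinarith [mul_le_mul_of_nonneg_left hsplit hα.le,
      mul_le_mul_of_nonneg_left step1 hα.le,
      mul_le_mul_of_nonneg_left hdd (by positivity : (0:ℝ) ≤ L / 2 * α ^ 2)]
  calc f (x + α • d) ≤ f x + ⟪gradient f x, α • d⟫ + L / 2 * ‖α • d‖ ^ 2 := hdesc
    _ = f x + α * ⟪gradient f x, d⟫ + L / 2 * (α * ‖d‖) ^ 2 := by rw [hinner, hnsmul]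
    _ ≤ f x + α * θ * ⟪d, g⟫ := by linarith
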